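/- If u's ancestors are disjoint from S (i.e., S ∩ A_u = ∅), then the marginal gain of adding u equals Δ(S,u) = (n_u - |∪_{j∈N_u∩S} N_j|)·p_u, which is strictly positive when p_u > 0. -/
import Mathlib


open MeasureTheory ProbabilityTheory

/-- A finite rooted tree given by a parent function. -/
structure ParentTree (V : Type*) where
  root : V
  parent : V → V
  parent_root : parent root = root
  reaches_root : ∀ v, ∃ n, parent^[n] v = root
  acyclic : ∀ v n, 0 < n → parent^[n] v = v → v = root

namespace ParentTree

variable {V : Type*}

/-- `anc i j` : `i` is a strict ancestor of `j`. -/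
def anc (T : ParentTree V) (i j : V) : Prop :=
  i ≠ j ∧ ∃ n, T.parent^[n] j = i

/-- The set of strict descendants of `i`. -/
def desc (T : ParentTree V) (i : V) : Set V := {v | T.anc i v}

/-- The number of strict descendants of `i`. -/
noncomputable def nd (T : ParentTree V) (i : V) : ℕ := (T.desc i).ncard

/-- The expected total reward of vaccinating the set `S`, where `p i = P(Z_i > τ)`. -/
noncomputable def reward (T : ParentTree V) (p : V → ℝ) (S : Finset V) : ℝ :=
  ∑ i ∈ S, ((T.nd i : ℝ) - ((⋃ j ∈ T.desc i ∩ (S : Set V), T.desc j).ncard : ℝ)) * p i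

end ParentTree

open ParentTree

open scoped Classical in
/-- depth of a vertex: least `n` with `parent^[n] v = root`. -/
noncomputable def ParentTree.depth (T : ParentTree V) (v : V) : ℕ :=
  Nat.find (T.reaches_root v)

open scoped Classical in
lemma ParentTree.depth_spec {V : Type*} (T : ParentTree V) (v : V) :
    T.parent^[T.depth v] v = T.root := Nat.find_spec (T.reaches_root v)

open scoped Classical in
lemma ParentTree.depth_min {V : Type*} (T : ParentTree V) (v : V) {n : ℕ}
    (h : T.parent^[n] v = T.root) : T.depth v ≤ n := Nat.find_min' (T.reaches_root v) h

lemma ParentTree.iterate_root {V : Type*} (T : ParentTree V) (n : ℕ) :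
    T.parent^[n] T.root = T.root := by
  induction n with
  | zero => rfl
  | succ k ih => rw [Function.iterate_succ_apply', ih, T.parent_root]

lemma ParentTree.depth_lt_of_anc {V : Type*} (T : ParentTree V) {i j : V}
    (h : T.anc i j) : T.depth i < T.depth j := by
  obtain ⟨hne, n, hn⟩ := h
  have hn0 : 0 < n := by
    rcases Nat.eq_zero_or_pos n with h0 | h0
    · subst h0; exact absurd hn.symm hne
    · exact h0
  have hdj : 0 < T.depth j := by
    rcases Nat.eq_zero_or_pos (T.depth j) with h0 | h0
    · have hj : j = T.root := by have := T.depth_spec j; simpa [h0] using this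
      have : T.parent^[n] j = j := by rw [hj]; exact T.iterate_root n
      exact absurd (this ▸ hn).symm (by rwa [this] at hn)
    · exact h0
  rcases le_or_gt n (T.depth j) with hle | hlt
  · have : T.parent^[T.depth j - n] i = T.root := by
      rw [← hn, ← Function.iterate_add_apply]
      rw [Nat.sub_add_cancel hle]
      exact T.depth_spec j
    have := T.depth_min i this
    omega
  · -- depth j < n : then i = root
    have : i = T.root := by
      rw [← hn, ← Nat.sub_add_cancel hlt.le, Function.iterate_add_apply, T.depth_spec j,
        T.iterate_root]
    have : T.depth i = 0 := by
      apply Nat.le_zero.mp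
      apply T.depth_min
      simp [this]
    omega

lemma ParentTree.anc_trans {V : Type*} (T : ParentTree V) {i j k : V}
    (h1 : T.anc i j) (h2 : T.anc j k) : T.anc i k := by
  have d1 := T.depth_lt_of_anc h1
  have d2 := T.depth_lt_of_anc h2
  obtain ⟨_, n, hn⟩ := h1
  obtain ⟨_, m, hm⟩ := h2
  refine ⟨?_, n + m, by rw [Function.iterate_add_apply, hm, hn]⟩
  intro hik
  rw [hik] at d1
  omega

lemma ParentTree.notMem_desc_self {V : Type*} (T : ParentTree V) (i : V) :
    i ∉ T.desc i := fun h => h.1 rfl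

lemma ParentTree.desc_subset {V : Type*} (T : ParentTree V) {u j : V}
    (h : j ∈ T.desc u) : T.desc j ⊆ T.desc u := fun _ hv => T.anc_trans h hv

/-- If no ancestor of `u` lies in `S` (`S ∩ A_u = ∅`), then the marginal gain of adding
`u` equals `(n_u - |∪_{j∈N_u∩S} N_j|)·p_u`, which is strictly positive when `p_u > 0`
(here `u` has at least one descendant). -/
theorem marginal_gain_no_ancestor {V : Type*} [Fintype V] [DecidableEq V]
    (T : ParentTree V) (p : V → ℝ)
    (S : Finset V) (u : V) (hu : u ∉ S)
    (hanc : ∀ a ∈ S, ¬ T.anc a u) (hne : (T.desc u).Nonempty) :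
    T.reward p (insert u S) - T.reward p S
        = ((T.nd u : ℝ) - ((⋃ j ∈ T.desc u ∩ (S : Set V), T.desc j).ncard : ℝ)) * p u
      ∧ (0 < p u → 0 < T.reward p (insert u S) - T.reward p S) := by
  have hsets : ∀ i : V, ¬ T.anc i u →
      T.desc i ∩ ((insert u S : Finset V) : Set V) = T.desc i ∩ (S : Set V) := by
    intro i hi
    ext v
    simp only [Finset.coe_insert, Set.mem_inter_iff, Set.mem_insert_iff, Finset.mem_coe]
    constructor
    · rintro ⟨hv, rfl | hv2⟩
      · exact absurd hv hi
      · exact ⟨hv, hv2⟩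
    · rintro ⟨hv, hv2⟩; exact ⟨hv, Or.inr hv2⟩
  have key : T.reward p (insert u S) - T.reward p S
      = ((T.nd u : ℝ) - ((⋃ j ∈ T.desc u ∩ (S : Set V), T.desc j).ncard : ℝ)) * p u := by
    unfold ParentTree.reward
    rw [Finset.sum_insert hu]
    rw [hsets u (fun h => h.1 rfl)]
    have : ∀ i ∈ S,
        ((T.nd i : ℝ) - ((⋃ j ∈ T.desc i ∩ ((insert u S : Finset V) : Set V), T.desc j).ncard : ℝ)) * p i
        = ((T.nd i : ℝ) - ((⋃ j ∈ T.desc i ∩ (S : Set V), T.desc j).ncard : ℝ)) * p i := by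
      intro i hi
      rw [hsets i (hanc i hi)]
    rw [Finset.sum_congr rfl this]
    ring
  refine ⟨key, fun hp => ?_⟩
  rw [key]
  apply mul_pos _ hp
  have hsub : (⋃ j ∈ T.desc u ∩ (S : Set V), T.desc j) ⊂ T.desc u := by
    constructor
    · intro v hv
      simp only [Set.mem_iUnion] at hv
      obtain ⟨j, ⟨hj, _⟩, hv⟩ := hv
      exact T.desc_subset hj hv
    · intro hcon
      rcases Set.eq_empty_or_nonempty (T.desc u ∩ (S : Set V)) with hemp | hnon
      · obtain ⟨v, hv⟩ := hne
        have := hcon hv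
        simp [hemp] at this
      · obtain ⟨j₀, hj₀, hmin⟩ := Set.exists_min_image (T.desc u ∩ (S : Set V))
          T.depth (Set.toFinite _) hnon
        have := hcon hj₀.1
        simp only [Set.mem_iUnion] at this
        obtain ⟨j, hj, hj₀j⟩ := this
        have h1 := hmin j hj
        have h2 := T.depth_lt_of_anc hj₀j
        omega
  have hlt : (⋃ j ∈ T.desc u ∩ (S : Set V), T.desc j).ncard < T.nd u :=
    Set.ncard_lt_ncard hsub (Set.toFinite _)
  have : ((⋃ j ∈ T.desc u ∩ (S : Set V), T.desc j).ncard : ℝ) < (T.nd u : ℝ) := by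
    exact_mod_cast hlt
  linarith
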